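/- Let S be a set of unit vectors in a finite-dimensional normed space. If there exists a unit vector y in the relative interior of the convex hull of S, then every point of the convex hull of S is a unit vector. -/
import Mathlib

theorem unit_vectors_convex_hull
    (X : Type*) [NormedAddCommGroup X] [NormedSpace ℝ X] [FiniteDimensional ℝ X]
    (S : Set X) (hS : ∀ x ∈ S, ‖x‖ = 1)
    (y : X) (hy : ‖y‖ = 1) (hyint : y ∈ intrinsicInterior ℝ (convexHull ℝ S)) :
    ∀ z ∈ convexHull ℝ S, ‖z‖ = 1 := by
  have hball : convexHull ℝ S ⊆ Metric.closedBall (0 : X) 1 :=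
    convexHull_min (fun x hx => by simp [hS x hx]) (convex_closedBall 0 1)
  intro z hz
  have hz1 : ‖z‖ ≤ 1 := by simpa using hball hz
  set A := affineSpan ℝ (convexHull ℝ S) with hA
  obtain ⟨y', hy'int, hy'eq⟩ := mem_intrinsicInterior.mp hyint
  have hyA : y ∈ A := subset_affineSpan ℝ _ (intrinsicInterior_subset hyint)
  have hzA : z ∈ A := subset_affineSpan ℝ _ hz
  have hmem : ∀ t : ℝ, t • (y - z) + y ∈ A := fun t => by
    simpa using A.smul_vsub_vadd_mem t hyA hzA hyA
  set c : ℝ → A := fun t => ⟨t • (y - z) + y, hmem t⟩ with hc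
  have hcont : Continuous c := by
    apply Continuous.subtype_mk
    continuity
  have hopen : IsOpen (c ⁻¹' interior ((↑) ⁻¹' convexHull ℝ S)) :=
    isOpen_interior.preimage hcont
  have h0 : (0 : ℝ) ∈ c ⁻¹' interior ((↑) ⁻¹' convexHull ℝ S) := by
    have : c 0 = y' := by
      apply Subtype.ext
      simp [hc, hy'eq]
    simpa [this] using hy'int
  obtain ⟨ε, hε, hsub⟩ := Metric.isOpen_iff.mp hopen 0 h0
  set t : ℝ := ε / 2 with ht
  have htpos : 0 < t := by positivity
  have htball : t ∈ Metric.ball (0 : ℝ) ε := by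
    simp only [Metric.mem_ball, dist_zero_right, Real.norm_eq_abs, ht, abs_of_pos (by positivity : (0:ℝ) < ε/2)]
    linarith
  have hwmem : t • (y - z) + y ∈ convexHull ℝ S := by
    have := interior_subset (hsub htball)
    simpa using this
  have hw1 : ‖t • (y - z) + y‖ ≤ 1 := by simpa using hball hwmem
  have key : (1 + t) • y = (t • (y - z) + y) + t • z := by module
  have hnorm : (1 + t) = ‖(1 + t) • y‖ := by
    rw [norm_smul, hy]
    simp [abs_of_pos (by linarith : (0:ℝ) < 1 + t)]
  have : (1 + t) ≤ 1 + t * ‖z‖ := by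
    calc (1 + t) = ‖(t • (y - z) + y) + t • z‖ := by rw [hnorm, key]
    _ ≤ ‖t • (y - z) + y‖ + ‖t • z‖ := norm_add_le _ _
    _ ≤ 1 + t * ‖z‖ := by
        rw [norm_smul, Real.norm_eq_abs, abs_of_pos htpos]
        linarith
  have hz2 : 1 ≤ ‖z‖ := by nlinarith
  linarith
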